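/- Let (Ω, 𝓕, ℙ) be a probability space, let k ≥ 1 be an integer, and let {τ_z}_{z∈ℝ^k} be a measure-preserving additive group action on Ω. Let μ be a subadditive process with respect to {τ_z}_{z∈ℝ^k} with bound M, and let 𝓕_inv := {A ∈ 𝓕 : ℙ(τ_z⁻¹(A) Δ A) = 0 for all z ∈ ℝ^k} be the σ-algebra of invariant sets. Then ℙ-almost surely, for every n ∈ ℕ, E[μ([−2^{n+1}, 2^{n+1})^k, ·) | 𝓕_inv] ≤ 2^k · E[μ([−2^n, 2^n)^k, ·) | 𝓕_inv]; equivalently, the sequence n ↦ (2^{n+1})^{−k} E[μ([−2^n, 2^n)^k, ·) | 𝓕_inv](ω) is almost surely nonincreasing in n. -/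

import Mathlib

open MeasureTheory symmDiff

/-- For a subadditive process `μ` with respect to a measure-preserving additive group action
`{τ_z}_{z ∈ ℝ^k}`, the conditional expectations with respect to the σ-algebra of invariant sets
of the values of the process on the dyadic cubes `[-2^n, 2^n)^k` satisfy, almost surely for all
`n`, `E[μ([-2^{n+1},2^{n+1})^k)|𝓕_inv] ≤ 2^k E[μ([-2^n,2^n)^k)|𝓕_inv]`; equivalently, the
normalized sequence `(2^{n+1})^{-k} E[μ([-2^n,2^n)^k)|𝓕_inv]` is a.s. nonincreasing in `n`. -/
theorem condexp_subadditive_process_dyadic_antitone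
    {Ω : Type*} [m0 : MeasurableSpace Ω] (P : Measure Ω) [IsProbabilityMeasure P]
    (k : ℕ) (hk : 1 ≤ k)
    -- the measure-preserving additive group action
    (τ : (Fin k → ℝ) → Ω → Ω)
    (hτmeas : ∀ z, Measurable (τ z))
    (hτmp : ∀ z, MeasurePreserving (τ z) P P)
    (hτzero : τ 0 = id)
    (hτadd : ∀ z₁ z₂, τ (z₁ + z₂) = τ z₂ ∘ τ z₁)
    -- the subadditive process: `μ p q ω` is the value on the half-open box `[p, q)`
    (μ : (Fin k → ℝ) → (Fin k → ℝ) → Ω → ℝ) (M : ℝ) (hM : 0 < M)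
    -- measurability
    (hμmeas : ∀ p q : Fin k → ℝ, (∀ i, p i < q i) → Measurable (μ p q))
    -- stationarity
    (hμstat : ∀ (p q z : Fin k → ℝ) (ω : Ω), (∀ i, p i < q i) →
      μ (p + z) (q + z) ω = μ p q (τ z ω))
    -- subadditivity with respect to finite partitions into half-open boxes
    (hμsub : ∀ (ι : Type) (s : Finset ι) (p q : Fin k → ℝ) (p' q' : ι → (Fin k → ℝ)) (ω : Ω),
      (∀ i, p i < q i) → (∀ i ∈ s, ∀ j, p' i j < q' i j) →
      (Set.PairwiseDisjoint (s : Set ι)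
        fun i => {x : Fin k → ℝ | ∀ j, p' i j ≤ x j ∧ x j < q' i j}) →
      (⋃ i ∈ s, {x : Fin k → ℝ | ∀ j, p' i j ≤ x j ∧ x j < q' i j})
        = {x : Fin k → ℝ | ∀ j, p j ≤ x j ∧ x j < q j} →
      μ p q ω ≤ ∑ i ∈ s, μ (p' i) (q' i) ω)
    -- boundedness
    (hμbdd : ∀ (p q : Fin k → ℝ) (ω : Ω), (∀ i, p i < q i) →
      0 ≤ μ p q ω ∧ μ p q ω ≤ M * ∏ i, (q i - p i))
    -- the σ-algebra of invariant sets
    (mInv : MeasurableSpace Ω)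
    (hmInv : ∀ A : Set Ω, MeasurableSet[mInv] A ↔
      (MeasurableSet A ∧ ∀ z, P ((τ z ⁻¹' A) ∆ A) = 0)) :
    ∀ᵐ ω ∂P, ∀ n : ℕ,
      (P[μ (fun _ => -(2 : ℝ) ^ (n + 1)) (fun _ => (2 : ℝ) ^ (n + 1)) | mInv]) ω
        ≤ 2 ^ k * (P[μ (fun _ => -(2 : ℝ) ^ n) (fun _ => (2 : ℝ) ^ n) | mInv]) ω := by
  by_cases hm : mInv ≤ m0
  swap
  · simp only [condExp_of_not_le hm, Pi.zero_apply]
    filter_upwards with ω n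
    simp
  letI : MeasurableSpace Ω := m0
  -- τ z is a measurable equivalence (w.r.t. the ambient σ-algebra m0)
  have hinv : ∀ z, τ (-z) ∘ τ z = id := fun z => by
    rw [← hτadd, add_neg_cancel, hτzero]
  have hinv' : ∀ z, τ z ∘ τ (-z) = id := fun z => by
    rw [← hτadd, neg_add_cancel, hτzero]
  let e : (Fin k → ℝ) → @MeasurableEquiv Ω Ω m0 m0 := fun z =>
    { toFun := τ z
      invFun := τ (-z)
      left_inv := fun ω => congrFun (hinv z) ω
      right_inv := fun ω => congrFun (hinv' z) ω
      measurable_toFun := hτmeas z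
      measurable_invFun := hτmeas (-z) }
  have hemb : ∀ z, @MeasurableEmbedding Ω Ω m0 m0 (τ z) := fun z =>
    (e z).measurableEmbedding
  -- key: conditional expectation w.r.t. the invariant σ-algebra is τ-invariant
  have hkey : ∀ (f : Ω → ℝ) (z : Fin k → ℝ), Integrable f P →
      P[fun ω => f (τ z ω)|mInv] =ᵐ[P] P[f|mInv] := by
    intro f z hfi
    have hfzi : Integrable (fun ω => f (τ z ω)) P :=
      ((hτmp z).integrable_comp_emb (hemb z)).2 hfi
    refine (ae_eq_condExp_of_forall_setIntegral_eq hm hfzi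
      (fun s _ _ => integrable_condExp.integrableOn) (fun s hs _ => ?_)
      (StronglyMeasurable.aestronglyMeasurable stronglyMeasurable_condExp)).symm
    have hnull : P ((τ z ⁻¹' s) ∆ s) = 0 := ((hmInv s).1 hs).2 z
    have hse : (τ z ⁻¹' s : Set Ω) =ᵐ[P] s := measure_symmDiff_eq_zero_iff.mp hnull
    have h1 : ∫ x in s, f (τ z x) ∂P = ∫ x in τ z ⁻¹' s, f (τ z x) ∂P :=
      setIntegral_congr_set hse.symm
    have h2 : ∫ x in τ z ⁻¹' s, f (τ z x) ∂P = ∫ y in s, f y ∂P :=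
      (hτmp z).setIntegral_preimage_emb (hemb z) f s
    rw [setIntegral_condExp hm hfi hs, h1, h2]
  -- bounds of the cubes
  have hlt : ∀ n : ℕ, ∀ i : Fin k, -(2:ℝ)^n < (2:ℝ)^n := fun n i => by
    have : (0:ℝ) < 2^n := pow_pos two_pos n
    linarith
  -- integrability of the process values
  have hint : ∀ n : ℕ,
      Integrable (μ (fun _ => -(2:ℝ)^n) (fun _ => (2:ℝ)^n)) P := by
    intro n
    refine (integrable_const (M * ∏ i : Fin k, ((2:ℝ)^n - -(2:ℝ)^n))).mono'
      ((hμmeas _ _ (hlt n)).aestronglyMeasurable) ?_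
    filter_upwards with ω
    have h := hμbdd (fun _ => -(2:ℝ)^n) (fun _ => (2:ℝ)^n) ω (hlt n)
    rw [Real.norm_eq_abs, abs_of_nonneg h.1]
    exact h.2
  -- pointwise subadditivity over the dyadic decomposition
  have hpt : ∀ (n : ℕ) (ω : Ω),
      μ (fun _ => -(2:ℝ)^(n+1)) (fun _ => (2:ℝ)^(n+1)) ω ≤
      ∑ ε : Fin k → Bool, μ (fun _ => -(2:ℝ)^n) (fun _ => (2:ℝ)^n)
        (τ (fun j => if ε j then (2:ℝ)^n else -(2:ℝ)^n) ω) := by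
    intro n ω
    set a : ℝ := (2:ℝ)^n with ha_def
    have ha : (0:ℝ) < a := pow_pos two_pos n
    have h2a : (2:ℝ)^(n+1) = 2*a := by rw [pow_succ]; ring
    set z : (Fin k → Bool) → Fin k → ℝ := fun ε j => if ε j then a else -a with hz_def
    have hmain := hμsub (Fin k → Bool) Finset.univ (fun _ => -(2*a)) (fun _ => 2*a)
      (fun ε => (fun _ => -a) + z ε) (fun ε => (fun _ => a) + z ε) ω
      (fun i => by show -(2*a) < 2*a; linarith)
      (by
        intro ε _ j
        show (-a) + z ε j < a + z ε j
        have : z ε j = a ∨ z ε j = -a := by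
          by_cases h : ε j <;> simp [hz_def, h]
        rcases this with h | h <;> rw [h] <;> linarith)
      (by
        intro ε _ ε' _ hne
        simp only [Function.onFun]
        rw [Set.disjoint_left]
        intro x hx hx'
        have hj : ∃ j, ε j ≠ ε' j := by
          by_contra h; push_neg at h; exact hne (funext h)
        obtain ⟨j, hj⟩ := hj
        have h1 := hx j
        have h2 := hx' j
        simp only [Pi.add_apply, hz_def] at h1 h2
        rcases Bool.eq_false_or_eq_true (ε j) with h | h <;>
          rcases Bool.eq_false_or_eq_true (ε' j) with h' | h' <;>
            simp [h, h'] at h1 h2 hj <;>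
              linarith [h1.1, h1.2, h2.1, h2.2])
      (by
        ext x
        simp only [Set.mem_iUnion, Set.mem_setOf_eq, Finset.mem_univ, exists_prop,
          true_and, Pi.add_apply]
        constructor
        · rintro ⟨ε, hx⟩ j
          have h1 := hx j
          simp only [hz_def, Pi.add_apply] at h1
          have hb : (if ε j = true then a else -a) = a ∨
              (if ε j = true then a else -a) = -a := by
            by_cases h : ε j = true
            · exact Or.inl (if_pos h)
            · exact Or.inr (if_neg h)
          rcases hb with hb | hb <;> rw [hb] at h1 <;>
            exact ⟨by linarith [h1.1], by linarith [h1.2]⟩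
        · intro hx
          refine ⟨fun j => decide (0 ≤ x j), fun j => ?_⟩
          have h1 := hx j
          simp only [hz_def, Pi.add_apply]
          by_cases h : 0 ≤ x j
          · rw [if_pos (decide_eq_true h)]
            exact ⟨by linarith, by linarith [h1.2]⟩
          · rw [if_neg (by simpa using h)]
            exact ⟨by linarith [h1.1], by linarith [not_le.mp h]⟩)
    calc μ (fun _ => -(2:ℝ)^(n+1)) (fun _ => (2:ℝ)^(n+1)) ω
        = μ (fun _ => -(2*a)) (fun _ => 2*a) ω := by rw [h2a]
      _ ≤ ∑ ε : Fin k → Bool, μ ((fun _ => -a) + z ε) ((fun _ => a) + z ε) ω := hmain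
      _ = ∑ ε : Fin k → Bool, μ (fun _ => -(2:ℝ)^n) (fun _ => (2:ℝ)^n)
            (τ (fun j => if ε j then (2:ℝ)^n else -(2:ℝ)^n) ω) := by
          refine Finset.sum_congr rfl fun ε _ => ?_
          exact hμstat (fun _ => -a) (fun _ => a) (z ε) ω (hlt n)
  -- the a.e. inequality for each fixed n
  have hstep : ∀ n : ℕ, ∀ᵐ ω ∂P,
      (P[μ (fun _ => -(2:ℝ)^(n+1)) (fun _ => (2:ℝ)^(n+1))|mInv]) ω ≤
        2 ^ k * (P[μ (fun _ => -(2:ℝ)^n) (fun _ => (2:ℝ)^n)|mInv]) ω := by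
    intro n
    set g : Ω → ℝ := μ (fun _ => -(2:ℝ)^n) (fun _ => (2:ℝ)^n) with hg_def
    set z : (Fin k → Bool) → Fin k → ℝ :=
      fun ε j => if ε j then (2:ℝ)^n else -(2:ℝ)^n with hz_def
    have hgz : ∀ ε : Fin k → Bool, Integrable (fun ω => g (τ (z ε) ω)) P := fun ε =>
      ((hτmp (z ε)).integrable_comp_emb (hemb (z ε))).2 (hint n)
    have h1 : P[μ (fun _ => -(2:ℝ)^(n+1)) (fun _ => (2:ℝ)^(n+1))|mInv] ≤ᵐ[P]
        P[∑ ε : Fin k → Bool, fun ω => g (τ (z ε) ω)|mInv] := by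
      refine condExp_mono (hint (n+1)) (integrable_finset_sum' _ fun ε _ => hgz ε) ?_
      filter_upwards with ω
      simpa [Finset.sum_apply] using hpt n ω
    have h2 : P[∑ ε : Fin k → Bool, fun ω => g (τ (z ε) ω)|mInv] =ᵐ[P]
        ∑ ε : Fin k → Bool, P[fun ω => g (τ (z ε) ω)|mInv] :=
      condExp_finset_sum (fun ε _ => hgz ε) mInv
    have h3 : ∀ ε : Fin k → Bool,
        P[fun ω => g (τ (z ε) ω)|mInv] =ᵐ[P] P[g|mInv] := fun ε =>
      hkey g (z ε) (hint n)
    have h3' : ∀ᵐ ω ∂P, ∀ ε : Fin k → Bool,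
        (P[fun ω' => g (τ (z ε) ω')|mInv]) ω = (P[g|mInv]) ω := ae_all_iff.mpr h3
    filter_upwards [h1, h2, h3'] with ω h1ω h2ω h3ω
    have hsum : (∑ ε : Fin k → Bool, P[fun ω' => g (τ (z ε) ω')|mInv]) ω
        = 2 ^ k * (P[g|mInv]) ω := by
      rw [Finset.sum_apply]
      rw [Finset.sum_congr rfl fun ε _ => h3ω ε]
      simp [Finset.card_univ, mul_comm]
    calc (P[μ (fun _ => -(2:ℝ)^(n+1)) (fun _ => (2:ℝ)^(n+1))|mInv]) ω
        ≤ (P[∑ ε : Fin k → Bool, fun ω' => g (τ (z ε) ω')|mInv]) ω := h1ω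
      _ = (∑ ε : Fin k → Bool, P[fun ω' => g (τ (z ε) ω')|mInv]) ω := h2ω
      _ = 2 ^ k * (P[g|mInv]) ω := hsum
  exact ae_all_iff.mpr hstep
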